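/- Let (S_n)_{n≥0} be a random walk with S_0 = 0 and i.i.d. increments X_k with E[X] > 0, and let (η_k)_{k≥1} be identically distributed nonnegative random variables (not necessarily independent of the walk) such that for some ε > 0, E[(log⁺ η_1)^{1+ε}] < ∞. Then the series G := Σ_{k=0}^∞ η_{k+1} e^{-S_k} converges almost surely. -/

import Mathlib

open MeasureTheory ProbabilityTheory Finset Filter
open scoped ENNReal

/-- Let `S_n = X₁ + ⋯ + Xₙ` be a random walk with i.i.d. increments of positive
mean, and `(η_k)` identically distributed nonnegative random variables with
`E[(log⁺ η₁)^{1+ε}] < ∞` for some `ε > 0`. Then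
`G = Σ_{k=0}^∞ η_{k+1} e^{-S_k}` converges almost surely. -/
theorem summable_eta_expNegS
    {Ω : Type*} [MeasurableSpace Ω] (μ : Measure Ω) [IsProbabilityMeasure μ]
    (X : ℕ → Ω → ℝ) (η : ℕ → Ω → ℝ) (ε : ℝ) (hε : 0 < ε)
    (hXmeas : ∀ k, Measurable (X k))
    (hXindep : iIndepFun X μ)
    (hXident : ∀ k, Measure.map (X k) μ = Measure.map (X 0) μ)
    (hXint : Integrable (X 0) μ)
    (hXmean : 0 < ∫ ω, X 0 ω ∂μ)
    (hηmeas : ∀ k, Measurable (η k))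
    (hηnonneg : ∀ k ω, 0 ≤ η k ω)
    (hηident : ∀ k, 1 ≤ k → Measure.map (η k) μ = Measure.map (η 1) μ)
    (hηmom : Integrable (fun ω => (max (Real.log (η 1 ω)) 0) ^ (1 + ε)) μ) :
    ∀ᵐ ω ∂μ, Summable (fun k : ℕ =>
      η (k + 1) ω * Real.exp (-(∑ j ∈ Finset.range k, X (j + 1) ω))) := by
  set m := ∫ ω, X 0 ω ∂μ with hm
  have hmpos : 0 < m := hXmean
  set δ : ℝ := m / 8 with hδ
  have hδpos : 0 < δ := by positivity
  -- identical distribution of shifted increments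
  have hIdent : ∀ i : ℕ, IdentDistrib (X (i + 1)) (X 0) μ μ := fun i =>
    ⟨(hXmeas _).aemeasurable, (hXmeas 0).aemeasurable, hXident _⟩
  -- SLLN
  have hSLLN : ∀ᵐ ω ∂μ, Tendsto
      (fun n : ℕ => (∑ i ∈ range n, X (i + 1) ω) / n) atTop (nhds m) := by
    have h := strong_law_ae_real (fun i => X (i + 1))
      ((hIdent 0).integrable_iff.mpr hXint)
      (fun i j hij => hXindep.indepFun (by omega))
      (fun i => (hIdent i).trans (hIdent 0).symm)
    simpa [(hIdent 0).integral_eq] using h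
  have hS : ∀ᵐ ω ∂μ, ∀ᶠ k in atTop,
      (m / 2) * k ≤ ∑ j ∈ range k, X (j + 1) ω := by
    filter_upwards [hSLLN] with ω hω
    have h1 : ∀ᶠ k : ℕ in atTop, m / 2 < (∑ i ∈ range k, X (i + 1) ω) / k :=
      hω.eventually_const_lt (by linarith)
    filter_upwards [h1, eventually_gt_atTop 0] with k hk hk0
    have hkpos : (0 : ℝ) < k := by exact_mod_cast hk0
    rw [lt_div_iff₀ hkpos] at hk
    linarith
  -- Borel–Cantelli
  set g : Ω → ℝ := fun ω => (max (Real.log (η 1 ω)) 0) ^ (1 + ε) with hg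
  have hgnn : ∀ ω, 0 ≤ g ω := fun ω => Real.rpow_nonneg (le_max_right _ _) _
  set B : ℕ → Set ℝ := fun k => {x | δ * (k + 1) ≤ max (Real.log x) 0} with hB
  have hBmeas : ∀ k, MeasurableSet (B k) := fun k =>
    measurableSet_le measurable_const (Real.measurable_log.max measurable_const)
  set s : ℕ → Set Ω := fun k => η (k + 1) ⁻¹' B k with hs
  have hgmeas : Measurable g :=
    (Real.continuous_rpow_const (by positivity : (0:ℝ) ≤ 1 + ε)).measurable.comp
      ((Real.measurable_log.comp (hηmeas 1)).max measurable_const)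
  set I : ℝ≥0∞ := ENNReal.ofReal (∫ ω, g ω ∂μ) with hI
  have hlint : ∫⁻ ω, ENNReal.ofReal (g ω) ∂μ = I :=
    (ofReal_integral_eq_lintegral_ofReal hηmom
      (Filter.Eventually.of_forall hgnn)).symm
  have hmeas_s : ∀ k, μ (s k) ≤
      ENNReal.ofReal ((∫ ω, g ω ∂μ) / δ ^ (1 + ε) * ((k : ℝ) + 1) ^ (-(1 + ε))) := by
    intro k
    have h1 : μ (s k) = μ (η 1 ⁻¹' B k) := by
      rw [hs]
      rw [← Measure.map_apply (hηmeas _) (hBmeas k), hηident (k + 1) (by omega),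
        Measure.map_apply (hηmeas 1) (hBmeas k)]
    have hak : (0 : ℝ) < (δ * (k + 1)) ^ (1 + ε) := by positivity
    have h2 : η 1 ⁻¹' B k ⊆ {ω | ENNReal.ofReal ((δ * (k + 1)) ^ (1 + ε)) ≤ ENNReal.ofReal (g ω)} := by
      intro ω hω
      exact ENNReal.ofReal_le_ofReal
        (Real.rpow_le_rpow (by positivity) hω (by positivity))
    have h3 := mul_meas_ge_le_lintegral₀ (μ := μ)
      (hgmeas.ennreal_ofReal.aemeasurable)
      (ENNReal.ofReal ((δ * (k + 1)) ^ (1 + ε)))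
    rw [hlint] at h3
    have h4 : μ (η 1 ⁻¹' B k) ≤ I / ENNReal.ofReal ((δ * (k + 1)) ^ (1 + ε)) := by
      rw [ENNReal.le_div_iff_mul_le (Or.inl (ENNReal.ofReal_pos.mpr hak).ne')
        (Or.inl ENNReal.ofReal_ne_top), mul_comm]
      exact le_trans (mul_le_mul_right (measure_mono h2) _) h3
    rw [h1]
    refine h4.trans ?_
    rw [hI, ← ENNReal.ofReal_div_of_pos hak]
    apply ENNReal.ofReal_le_ofReal
    rw [Real.mul_rpow hδpos.le (by positivity), Real.rpow_neg (by positivity),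
      div_eq_mul_inv, div_eq_mul_inv, mul_inv, mul_assoc]
  have hsum : (∑' k, μ (s k)) ≠ ⊤ := by
    have hsummable : Summable (fun k : ℕ =>
        (∫ ω, g ω ∂μ) / δ ^ (1 + ε) * ((k : ℝ) + 1) ^ (-(1 + ε))) := by
      apply Summable.mul_left
      have : Summable (fun n : ℕ => ((n : ℝ)) ^ (-(1 + ε))) :=
        Real.summable_nat_rpow.mpr (by linarith)
      have := (summable_nat_add_iff 1).mpr this
      simpa using this
    refine ne_top_of_le_ne_top ?_ (ENNReal.tsum_le_tsum hmeas_s)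
    rw [← ENNReal.ofReal_tsum_of_nonneg (fun k => by positivity) hsummable]
    exact ENNReal.ofReal_ne_top
  have hBC : ∀ᵐ ω ∂μ, ∀ᶠ k in atTop, ω ∉ s k := ae_eventually_notMem hsum
  -- combine
  filter_upwards [hS, hBC] with ω hSω hBCω
  rw [eventually_atTop] at hSω hBCω
  obtain ⟨N₁, hN₁⟩ := hSω
  obtain ⟨N₂, hN₂⟩ := hBCω
  set N := max N₁ N₂ with hN
  rw [← summable_nat_add_iff N]
  have hterm : ∀ k : ℕ, η (k + N + 1) ω *
      Real.exp (-(∑ j ∈ range (k + N), X (j + 1) ω)) ≤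
      Real.exp (m / 8) * Real.exp (-(m / 4)) ^ k := by
    intro k
    have hη_le : η (k + N + 1) ω ≤ Real.exp (δ * ((k + N : ℕ) + 1)) := by
      have hnotin := hN₂ (k + N) (le_trans (le_max_right _ _) (Nat.le_add_left _ _))
      have hlt : max (Real.log (η (k + N + 1) ω)) 0 < δ * ((k + N : ℕ) + 1) := by
        by_contra h
        exact hnotin (not_lt.mp h)
      have hle : η (k + N + 1) ω ≤ Real.exp (max (Real.log (η (k + N + 1) ω)) 0) := by
        rcases lt_or_ge 0 (η (k + N + 1) ω) with h | h
        · nth_rewrite 1 [← Real.exp_log h]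
          exact Real.exp_le_exp.mpr (le_max_left _ _)
        · exact h.trans (Real.exp_pos _).le
      exact hle.trans (Real.exp_le_exp.mpr hlt.le)
    have hSle : (m / 2) * (k + N : ℕ) ≤ ∑ j ∈ range (k + N), X (j + 1) ω :=
      hN₁ (k + N) (le_trans (le_max_left _ _) (Nat.le_add_left _ _))
    calc η (k + N + 1) ω * Real.exp (-(∑ j ∈ range (k + N), X (j + 1) ω))
        ≤ Real.exp (δ * ((k + N : ℕ) + 1)) * Real.exp (-((m / 2) * (k + N : ℕ))) := by
          apply mul_le_mul hη_le (Real.exp_le_exp.mpr (by linarith)) (Real.exp_pos _).le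
            (Real.exp_pos _).le
      _ = Real.exp (δ * ((k + N : ℕ) + 1) - (m / 2) * (k + N : ℕ)) := by
          rw [← Real.exp_add]; ring_nf
      _ ≤ Real.exp (m / 8 + (k : ℕ) * (-(m / 4))) := by
          apply Real.exp_le_exp.mpr
          have hkN : (k : ℝ) ≤ ((k + N : ℕ) : ℝ) := by push_cast; linarith [Nat.cast_nonneg (α := ℝ) N]
          rw [hδ]
          push_cast
          nlinarith [Nat.cast_nonneg (α := ℝ) N, Nat.cast_nonneg (α := ℝ) k, hmpos]
      _ = Real.exp (m / 8) * Real.exp (-(m / 4)) ^ k := by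
          rw [Real.exp_add, ← Real.exp_nat_mul]
  apply Summable.of_nonneg_of_le
    (fun k => mul_nonneg (hηnonneg _ _) (Real.exp_pos _).le) hterm
  exact (summable_geometric_of_lt_one (Real.exp_pos _).le
    (Real.exp_lt_one_iff.mpr (by linarith))).mul_left _
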